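/- Fix β₁, β₂ ∈ ℝ and let C₄ > 0 satisfy C₄ ∫_ℝ e^{−x⁴} dx = 1. For an n×n symmetric real matrix x with zero diagonal, let T(x) = (β₁/n²) Σ_{i,j} x_{ij} + (β₂/n³) Σ_{i=1}^n (Σ_{j=1}^n x_{ij})², and for l > 0 let x^l be the entrywise truncation (x^l)_{ij} = min(max(x_{ij}, −l), l). Then for every ε > 0, limsup_{l→∞} limsup_{n→∞} (1/n²) ln ( C₄^{n(n−1)/2} ∫_{{|T(x) − T(x^l)| > ε}} exp(n² T(x) − Σ_{i<j} x_{ij}⁴) ∏_{i<j} dx_{ij} ) = −∞, where the integral is the Lebesgue integral over all symmetric matrices with zero diagonal, identified with ℝ^{n(n−1)/2}. In particular, condition (C2)' holds for the edge–two-star model with base measure of density C₄ e^{−x⁴}. -/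

import Mathlib

open MeasureTheory Filter Set ProbabilityTheory
open scoped ENNReal Topology

noncomputable section

/-- Index set of above-diagonal entries of an `n × n` matrix. -/
abbrev UpIdx (n : ℕ) := {p : Fin n × Fin n // p.1 < p.2}

/-- The i.i.d. base measure on the above-diagonal entries. -/
def Pmeas (μ : Measure ℝ) (n : ℕ) : Measure (UpIdx n → ℝ) :=
  Measure.pi fun _ => μ

/-- The symmetric matrix (with zero diagonal) built from above-diagonal entries. -/
def matOf {n : ℕ} (x : UpIdx n → ℝ) (i j : Fin n) : ℝ :=
  if h : i < j then x ⟨(i, j), h⟩ else if h' : j < i then x ⟨(j, i), h'⟩ else 0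

/-- The edge–two-star exponent `β₁ Σ_{i,j} x_{ij} + (β₂/n) Σ_i (Σ_j x_{ij})²`. -/
def twoStarExp (n : ℕ) (β₁ β₂ : ℝ) (m : Fin n → Fin n → ℝ) : ℝ :=
  β₁ * (∑ i, ∑ j, m i j) + (β₂ / n) * ∑ i, (∑ j, m i j) ^ 2

/-- The normalized edge–two-star statistic
`T(x) = (β₁/n²) Σ_{i,j} x_{ij} + (β₂/n³) Σ_i (Σ_j x_{ij})²`. -/
def Tmat (n : ℕ) (β₁ β₂ : ℝ) (m : Fin n → Fin n → ℝ) : ℝ :=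
  (β₁ / (n : ℝ) ^ 2) * (∑ i, ∑ j, m i j) + (β₂ / (n : ℝ) ^ 3) * ∑ i, (∑ j, m i j) ^ 2

/-- Truncation `f_l` at level `l`. -/
def trunc (l q : ℝ) : ℝ := min (max q (-l)) l

/-- Entrywise truncation of a matrix. -/
def truncM {n : ℕ} (l : ℝ) (m : Fin n → Fin n → ℝ) : Fin n → Fin n → ℝ :=
  fun i j => trunc l (m i j)

/-- Extended-real logarithm (`= −∞` on nonpositive reals). -/
def elog (r : ℝ) : EReal := if r ≤ 0 then ⊥ else ((Real.log r : ℝ) : EReal)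

namespace CondC2Aux

lemma abs_trunc_le {l : ℝ} (hl : 0 ≤ l) (y : ℝ) : |trunc l y| ≤ l := by
  rw [abs_le]
  refine ⟨le_min (le_max_right _ _) (by linarith), min_le_right _ _⟩

lemma err_cases {l : ℝ} (hl : 0 ≤ l) (y : ℝ) :
    |y - trunc l y| = 0 ∨ (l ≤ |y| ∧ |y - trunc l y| ≤ |y|) := by
  rcases le_or_gt |y| l with h | h
  · left
    obtain ⟨h1, h2⟩ := abs_le.mp h
    have : trunc l y = y := by
      rw [trunc, max_eq_left h1, min_eq_left h2]
    rw [this, sub_self, abs_zero]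
  · right
    refine ⟨h.le, ?_⟩
    rcases le_or_gt 0 y with hy | hy
    · have hy' : l < y := by rwa [abs_of_nonneg hy] at h
      have : trunc l y = l := by
        rw [trunc, max_eq_left (by linarith), min_eq_right hy'.le]
      rw [this, abs_of_nonneg (by linarith), abs_of_nonneg hy]
      linarith
    · have hy' : y < -l := by rw [abs_of_neg hy] at h; linarith
      have : trunc l y = -l := by
        rw [trunc, max_eq_right hy'.le, min_eq_left (by linarith)]
      rw [this, abs_of_nonpos (by linarith), abs_of_neg hy]
      linarith

lemma err_le {l y : ℝ} (hl : 1 ≤ l) : |y - trunc l y| * l ^ 3 ≤ y ^ 4 := by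
  rcases err_cases (by linarith : (0:ℝ) ≤ l) y with h | ⟨h1, h2⟩
  · rw [h, zero_mul]; positivity
  · have h0 : 0 ≤ |y - trunc l y| := abs_nonneg _
    have hy : |y| ^ 4 = y ^ 4 := by
      rw [← abs_pow, abs_of_nonneg (by positivity)]
    calc |y - trunc l y| * l ^ 3 ≤ |y| * |y| ^ 3 :=
          mul_le_mul h2 (pow_le_pow_left₀ (by linarith) h1 3) (by positivity) (abs_nonneg y)
      _ = |y| ^ 4 := by ring
      _ = y ^ 4 := hy

lemma err_sq_le {l y : ℝ} (hl : 1 ≤ l) : |y - trunc l y| ^ 2 * l ^ 2 ≤ y ^ 4 := by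
  rcases err_cases (by linarith : (0:ℝ) ≤ l) y with h | ⟨h1, h2⟩
  · rw [h]; simp only [ne_eq, OfNat.ofNat_ne_zero, not_false_eq_true, zero_pow, zero_mul]
    positivity
  · have h0 : 0 ≤ |y - trunc l y| := abs_nonneg _
    have hy : |y| ^ 4 = y ^ 4 := by
      rw [← abs_pow, abs_of_nonneg (by positivity)]
    calc |y - trunc l y| ^ 2 * l ^ 2 ≤ |y| ^ 2 * |y| ^ 2 :=
          mul_le_mul (pow_le_pow_left₀ h0 h2 2) (pow_le_pow_left₀ (by linarith) h1 2)
            (by positivity) (by positivity)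
      _ = |y| ^ 4 := by ring
      _ = y ^ 4 := hy

lemma sum_sum_matOf {n : ℕ} (F : ℝ → ℝ) (hF0 : F 0 = 0) (x : UpIdx n → ℝ) :
    ∑ i, ∑ j, F (matOf x i j) = 2 * ∑ p : UpIdx n, F (x p) := by
  classical
  have hmat : ∀ (p : Fin n × Fin n) (h : p.1 < p.2), matOf x p.1 p.2 = x ⟨p, h⟩ := by
    intro p h
    simp only [matOf, dif_pos h]
  have hswap : ∀ (p : Fin n × Fin n) (h : p.2 < p.1), matOf x p.1 p.2 = x ⟨(p.2, p.1), h⟩ := by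
    intro p h
    simp only [matOf, dif_neg (asymm h), dif_pos h]
  have base : ∑ i, ∑ j, F (matOf x i j) = ∑ p : Fin n × Fin n, F (matOf x p.1 p.2) := by
    rw [← Finset.sum_product', Finset.univ_product_univ]
  rw [base,
    ← Finset.sum_filter_add_sum_filter_not Finset.univ (fun p : Fin n × Fin n => p.1 < p.2),
    ← Finset.sum_filter_add_sum_filter_not
      (Finset.univ.filter (fun p : Fin n × Fin n => ¬ p.1 < p.2))
      (fun p : Fin n × Fin n => p.2 < p.1)]
  have e3 : ∑ p ∈ (Finset.univ.filter (fun p : Fin n × Fin n => ¬ p.1 < p.2)).filter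
      (fun p : Fin n × Fin n => ¬ p.2 < p.1), F (matOf x p.1 p.2) = 0 := by
    apply Finset.sum_eq_zero
    intro p hp
    simp only [Finset.mem_filter, Finset.mem_univ, true_and] at hp
    rw [show matOf x p.1 p.2 = 0 from by rw [matOf, dif_neg hp.1, dif_neg hp.2], hF0]
  have e1 : ∑ p ∈ Finset.univ.filter (fun p : Fin n × Fin n => p.1 < p.2),
      F (matOf x p.1 p.2) = ∑ p : UpIdx n, F (x p) := by
    rw [Finset.sum_subtype (p := fun p : Fin n × Fin n => p.1 < p.2)
      (Finset.univ.filter (fun p : Fin n × Fin n => p.1 < p.2))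
      (fun q => by simp) (fun p => F (matOf x p.1 p.2))]
    refine Finset.sum_congr rfl fun p _ => ?_
    rw [hmat p p.prop]
  have e2 : ∑ p ∈ (Finset.univ.filter (fun p : Fin n × Fin n => ¬ p.1 < p.2)).filter
      (fun p : Fin n × Fin n => p.2 < p.1), F (matOf x p.1 p.2)
      = ∑ p ∈ Finset.univ.filter (fun p : Fin n × Fin n => p.1 < p.2),
        F (matOf x p.1 p.2) := by
    refine Finset.sum_nbij' Prod.swap Prod.swap ?_ ?_ ?_ ?_ ?_
    · intro a ha
      simp only [Finset.mem_filter, Finset.mem_univ, true_and] at ha ⊢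
      exact ha.2
    · intro a ha
      simp only [Finset.mem_filter, Finset.mem_univ, true_and] at ha ⊢
      exact ⟨asymm ha, ha⟩
    · intro a _; simp
    · intro a _; simp
    · intro a ha
      simp only [Finset.mem_filter, Finset.mem_univ, true_and] at ha
      rw [hswap a ha.2, hmat a.swap ha.2]
      rfl
  rw [e1, e2, e1, e3]
  ring


lemma TmatBound {n : ℕ} (hn : 1 ≤ n) (β₁ β₂ : ℝ) (x : UpIdx n → ℝ) :
    (n : ℝ) ^ 2 * Tmat n β₁ β₂ (matOf x)
      ≤ (|β₁| + 2 * (|β₁| + |β₂|) ^ 2) * (n : ℝ) ^ 2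
        + (1 / 4) * ∑ p : UpIdx n, (x p) ^ 4 := by
  set m := matOf x with hm
  have hν : (0:ℝ) < (n:ℝ) := by exact_mod_cast Nat.pos_of_ne_zero (by omega)
  have h1 : (n:ℝ) ^ 2 * Tmat n β₁ β₂ m
      = β₁ * (∑ i, ∑ j, m i j) + (β₂ / (n:ℝ)) * ∑ i, (∑ j, m i j) ^ 2 := by
    rw [Tmat]; field_simp
  have edge : β₁ * (∑ i, ∑ j, m i j) ≤ |β₁| * ∑ i, ∑ j, |m i j| := by
    have habs : |∑ i, ∑ j, m i j| ≤ ∑ i, ∑ j, |m i j| :=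
      (Finset.abs_sum_le_sum_abs _ _).trans
        (Finset.sum_le_sum fun i _ => Finset.abs_sum_le_sum_abs _ _)
    calc β₁ * (∑ i, ∑ j, m i j) ≤ |β₁ * (∑ i, ∑ j, m i j)| := le_abs_self _
      _ = |β₁| * |∑ i, ∑ j, m i j| := abs_mul _ _
      _ ≤ |β₁| * ∑ i, ∑ j, |m i j| :=
          mul_le_mul_of_nonneg_left habs (abs_nonneg _)
  have star : (β₂ / (n:ℝ)) * ∑ i, (∑ j, m i j) ^ 2 ≤ |β₂| * ∑ i, ∑ j, (m i j) ^ 2 := by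
    have hS20 : (0:ℝ) ≤ ∑ i, (∑ j, m i j) ^ 2 := by positivity
    have hCS : ∀ i : Fin n, (∑ j, m i j) ^ 2 ≤ (n:ℝ) * ∑ j, (m i j) ^ 2 := by
      intro i
      have := sq_sum_le_card_mul_sum_sq (s := Finset.univ) (f := fun j => m i j)
      simpa using this
    have hS2 : ∑ i, (∑ j, m i j) ^ 2 ≤ (n:ℝ) * ∑ i, ∑ j, (m i j) ^ 2 := by
      rw [Finset.mul_sum]
      exact Finset.sum_le_sum fun i _ => hCS i
    calc (β₂ / (n:ℝ)) * ∑ i, (∑ j, m i j) ^ 2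
        ≤ (|β₂| / (n:ℝ)) * ∑ i, (∑ j, m i j) ^ 2 :=
          mul_le_mul_of_nonneg_right
            ((div_le_div_iff_of_pos_right hν).2 (le_abs_self β₂)) hS20
      _ ≤ (|β₂| / (n:ℝ)) * ((n:ℝ) * ∑ i, ∑ j, (m i j) ^ 2) :=
          mul_le_mul_of_nonneg_left hS2 (by positivity)
      _ = |β₂| * ∑ i, ∑ j, (m i j) ^ 2 := by field_simp
  have pointwise : ∀ y : ℝ, |β₁| * |y| + |β₂| * y ^ 2
      ≤ (|β₁| + 2 * (|β₁| + |β₂|) ^ 2) + y ^ 4 / 8 := by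
    intro y
    have h0 : 0 ≤ |y| := abs_nonneg y
    have ha : 0 ≤ |β₁| := abs_nonneg _
    have hb : 0 ≤ |β₂| := abs_nonneg _
    have hy2 : y ^ 2 = |y| ^ 2 := (sq_abs y).symm
    have hy4 : y ^ 4 = |y| ^ 4 := by rw [← abs_pow, abs_of_nonneg (by positivity)]
    rw [hy2, hy4]
    nlinarith [sq_nonneg (|y| - 1), sq_nonneg (|y| ^ 2 - 4 * (|β₁| + |β₂|)),
      mul_nonneg ha h0, sq_nonneg (|β₁| + |β₂|), mul_nonneg hb (sq_nonneg |y|)]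
  calc (n:ℝ) ^ 2 * Tmat n β₁ β₂ m
      = β₁ * (∑ i, ∑ j, m i j) + (β₂ / (n:ℝ)) * ∑ i, (∑ j, m i j) ^ 2 := h1
    _ ≤ |β₁| * (∑ i, ∑ j, |m i j|) + |β₂| * (∑ i, ∑ j, (m i j) ^ 2) := add_le_add edge star
    _ = ∑ i, ∑ j, (|β₁| * |m i j| + |β₂| * (m i j) ^ 2) := by
        simp only [Finset.sum_add_distrib, Finset.mul_sum]
    _ ≤ ∑ i, ∑ j, ((|β₁| + 2 * (|β₁| + |β₂|) ^ 2) + (m i j) ^ 4 / 8) :=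
        Finset.sum_le_sum fun i _ => Finset.sum_le_sum fun j _ => pointwise (m i j)
    _ = (|β₁| + 2 * (|β₁| + |β₂|) ^ 2) * (n:ℝ) ^ 2 + (1/8) * ∑ i, ∑ j, (m i j) ^ 4 := by
        simp only [Finset.sum_add_distrib, Finset.sum_const, Finset.card_univ,
          Fintype.card_fin, nsmul_eq_mul, ← Finset.sum_div]
        ring
    _ = (|β₁| + 2 * (|β₁| + |β₂|) ^ 2) * (n:ℝ) ^ 2 + (1/4) * ∑ p : UpIdx n, (x p) ^ 4 := by
        rw [hm, sum_sum_matOf (fun y => y ^ 4) (by norm_num) x]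
        ring

lemma badBound {n : ℕ} (hn : 1 ≤ n) {β₁ β₂ ε l : ℝ} (hl : 1 ≤ l) (x : UpIdx n → ℝ)
    (hx : ε < |Tmat n β₁ β₂ (matOf x) - Tmat n β₁ β₂ (truncM l (matOf x))|) :
    ε * l ^ 2 * (n:ℝ) ^ 2 ≤ (|β₁| + 3 * |β₂| + 1) * (2 * ∑ p : UpIdx n, (x p) ^ 4) := by
  have hl0 : (0:ℝ) ≤ l := by linarith
  have hν : (0:ℝ) < (n:ℝ) := by exact_mod_cast Nat.pos_of_ne_zero (by omega)
  set m := matOf x with hm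
  set g : ℝ → ℝ := fun y => |y - trunc l y| with hg
  set d : Fin n → ℝ := fun i => ∑ j, g (m i j) with hd
  set D : ℝ := ∑ i, d i with hD
  set S2 : ℝ := ∑ i, (d i) ^ 2 with hS2def
  set Q : ℝ := ∑ i, ∑ j, (m i j) ^ 4 with hQdef
  set r : Fin n → ℝ := fun i => ∑ j, m i j with hr
  set s : Fin n → ℝ := fun i => ∑ j, trunc l (m i j) with hs
  have hg0 : ∀ y, 0 ≤ g y := fun y => abs_nonneg _
  have hd0 : ∀ i, 0 ≤ d i := fun i => Finset.sum_nonneg fun j _ => hg0 _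
  have hD0 : 0 ≤ D := Finset.sum_nonneg fun i _ => hd0 i
  have hS20 : 0 ≤ S2 := Finset.sum_nonneg fun i _ => sq_nonneg _
  have hQ0 : 0 ≤ Q := Finset.sum_nonneg fun i _ => Finset.sum_nonneg fun j _ => by positivity
  have hQ : Q = 2 * ∑ p : UpIdx n, (x p) ^ 4 := by
    rw [hQdef, hm, sum_sum_matOf (fun y => y ^ 4) (by norm_num) x]
  -- difference formula
  have hdiff : Tmat n β₁ β₂ m - Tmat n β₁ β₂ (truncM l m)
      = (β₁ / (n:ℝ) ^ 2) * (∑ i, (r i - s i))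
        + (β₂ / (n:ℝ) ^ 3) * (∑ i, ((r i) ^ 2 - (s i) ^ 2)) := by
    simp only [Tmat, truncM, hr, hs, Finset.sum_sub_distrib]
    ring
  -- row facts
  have hrs : ∀ i, |r i - s i| ≤ d i := by
    intro i
    rw [hr, hs, hd, ← Finset.sum_sub_distrib]
    exact Finset.abs_sum_le_sum_abs _ _
  have hsl : ∀ i, |s i| ≤ (n:ℝ) * l := by
    intro i
    refine (Finset.abs_sum_le_sum_abs _ _).trans ?_
    calc ∑ j, |trunc l (m i j)| ≤ ∑ _j : Fin n, l :=
          Finset.sum_le_sum fun j _ => abs_trunc_le hl0 _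
      _ = (n:ℝ) * l := by simp [Finset.sum_const, Finset.card_univ]
  have hsq : ∀ i, |(r i) ^ 2 - (s i) ^ 2| ≤ (d i) ^ 2 + 2 * ((n:ℝ) * l) * d i := by
    intro i
    have h1 := hrs i
    have h2 := hsl i
    have habs : |(r i) ^ 2 - (s i) ^ 2| = |r i - s i| * |r i + s i| := by
      rw [← abs_mul]; ring_nf
    have h3 : |r i + s i| ≤ |r i - s i| + 2 * |s i| := by
      have : r i + s i = (r i - s i) + 2 * s i := by ring
      rw [this]
      refine (abs_add_le _ _).trans ?_
      rw [abs_mul]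
      simp [abs_of_nonneg]
    rw [habs]
    have h4 : |r i - s i| * |r i + s i| ≤ d i * (d i + 2 * ((n:ℝ) * l)) := by
      apply mul_le_mul h1 _ (abs_nonneg _) (hd0 i)
      refine h3.trans ?_
      have : |s i| * 2 ≤ ((n:ℝ) * l) * 2 := by linarith
      linarith [h1]
    linarith [h4]
  -- global bound on the difference
  have habs : |Tmat n β₁ β₂ m - Tmat n β₁ β₂ (truncM l m)|
      ≤ (|β₁| / (n:ℝ) ^ 2) * D + (|β₂| / (n:ℝ) ^ 3) * (S2 + 2 * (n:ℝ) * l * D) := by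
    rw [hdiff]
    refine (abs_add_le _ _).trans ?_
    have e1 : |(β₁ / (n:ℝ) ^ 2) * (∑ i, (r i - s i))| ≤ (|β₁| / (n:ℝ) ^ 2) * D := by
      rw [abs_mul, abs_div, abs_of_nonneg (by positivity : (0:ℝ) ≤ (n:ℝ) ^ 2)]
      refine mul_le_mul_of_nonneg_left ?_ (by positivity)
      refine (Finset.abs_sum_le_sum_abs _ _).trans ?_
      exact Finset.sum_le_sum fun i _ => hrs i
    have e2 : |(β₂ / (n:ℝ) ^ 3) * (∑ i, ((r i) ^ 2 - (s i) ^ 2))|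
        ≤ (|β₂| / (n:ℝ) ^ 3) * (S2 + 2 * (n:ℝ) * l * D) := by
      rw [abs_mul, abs_div, abs_of_nonneg (by positivity : (0:ℝ) ≤ (n:ℝ) ^ 3)]
      refine mul_le_mul_of_nonneg_left ?_ (by positivity)
      refine (Finset.abs_sum_le_sum_abs _ _).trans ?_
      calc ∑ i, |(r i) ^ 2 - (s i) ^ 2| ≤ ∑ i, ((d i) ^ 2 + 2 * ((n:ℝ) * l) * d i) :=
            Finset.sum_le_sum fun i _ => hsq i
        _ = S2 + 2 * (n:ℝ) * l * D := by
            simp only [Finset.sum_add_distrib, hS2def, hD, ← Finset.mul_sum]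
            ring
    exact add_le_add e1 e2
  -- quartic lower bounds
  have hD3 : l ^ 3 * D ≤ Q := by
    rw [hD, hQdef, Finset.mul_sum]
    refine Finset.sum_le_sum fun i _ => ?_
    rw [hd, Finset.mul_sum]
    refine Finset.sum_le_sum fun j _ => ?_
    have := err_le (l := l) (y := m i j) hl
    linarith
  have hS2b : l ^ 2 * S2 ≤ (n:ℝ) * Q := by
    rw [hS2def, hQdef, Finset.mul_sum, Finset.mul_sum]
    refine Finset.sum_le_sum fun i _ => ?_
    have hCS : (d i) ^ 2 ≤ (n:ℝ) * ∑ j, (g (m i j)) ^ 2 := by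
      have := sq_sum_le_card_mul_sum_sq (s := Finset.univ) (f := fun j => g (m i j))
      simpa [hd] using this
    have hterm : ∑ j, (g (m i j)) ^ 2 * l ^ 2 ≤ ∑ j, (m i j) ^ 4 :=
      Finset.sum_le_sum fun j _ => err_sq_le hl
    have : l ^ 2 * (d i) ^ 2 ≤ l ^ 2 * ((n:ℝ) * ∑ j, (g (m i j)) ^ 2) :=
      mul_le_mul_of_nonneg_left hCS (by positivity)
    calc l ^ 2 * (d i) ^ 2 ≤ l ^ 2 * ((n:ℝ) * ∑ j, (g (m i j)) ^ 2) := this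
      _ = (n:ℝ) * ∑ j, ((g (m i j)) ^ 2 * l ^ 2) := by
          simp only [Finset.mul_sum]
          exact Finset.sum_congr rfl fun j _ => by ring
      _ ≤ (n:ℝ) * ∑ j, (m i j) ^ 4 :=
          mul_le_mul_of_nonneg_left hterm (by positivity)
  -- combine
  have hε2 : ε < (|β₁| / (n:ℝ) ^ 2) * D + (|β₂| / (n:ℝ) ^ 3) * (S2 + 2 * (n:ℝ) * l * D) :=
    hx.trans_le habs
  have hmul : ε * (n:ℝ) ^ 3 * l ^ 2
      < (n:ℝ) * l ^ 2 * |β₁| * D + l ^ 2 * |β₂| * S2 + 2 * (n:ℝ) * l ^ 3 * |β₂| * D := by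
    have hpos : (0:ℝ) < (n:ℝ) ^ 3 * l ^ 2 := by positivity
    have h := mul_lt_mul_of_pos_left hε2 hpos
    have e : (n:ℝ) ^ 3 * l ^ 2 * ((|β₁| / (n:ℝ) ^ 2) * D + (|β₂| / (n:ℝ) ^ 3) * (S2 + 2 * (n:ℝ) * l * D))
        = (n:ℝ) * l ^ 2 * |β₁| * D + l ^ 2 * |β₂| * S2 + 2 * (n:ℝ) * l ^ 3 * |β₂| * D := by
      field_simp
      ring
    rw [e] at h
    linarith
  have hl2D : l ^ 2 * D ≤ Q := by nlinarith [hD3]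
  have t1 : (n:ℝ) * l ^ 2 * |β₁| * D ≤ (n:ℝ) * |β₁| * Q := by
    have := mul_le_mul_of_nonneg_left hl2D (by positivity : (0:ℝ) ≤ (n:ℝ) * |β₁|)
    linarith [this]
  have t2 : l ^ 2 * |β₂| * S2 ≤ (n:ℝ) * |β₂| * Q := by
    have := mul_le_mul_of_nonneg_left hS2b (abs_nonneg β₂)
    linarith [this]
  have t3 : 2 * (n:ℝ) * l ^ 3 * |β₂| * D ≤ 2 * (n:ℝ) * |β₂| * Q := by
    have := mul_le_mul_of_nonneg_left hD3 (by positivity : (0:ℝ) ≤ 2 * (n:ℝ) * |β₂|)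
    linarith [this]
  have hfin : ε * (n:ℝ) ^ 3 * l ^ 2 < (n:ℝ) * ((|β₁| + 3 * |β₂| + 1) * Q) := by
    have hQn : 0 ≤ (n:ℝ) * Q := mul_nonneg hν.le hQ0
    linarith [t1, t2, t3, hmul]
  have hcancel : ε * l ^ 2 * (n:ℝ) ^ 2 ≤ (|β₁| + 3 * |β₂| + 1) * Q := by
    have h2 : (n:ℝ) * (ε * l ^ 2 * (n:ℝ) ^ 2) < (n:ℝ) * ((|β₁| + 3 * |β₂| + 1) * Q) := by
      have e : (n:ℝ) * (ε * l ^ 2 * (n:ℝ) ^ 2) = ε * (n:ℝ) ^ 3 * l ^ 2 := by ring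
      rw [e]
      exact hfin
    exact (le_of_lt (lt_of_mul_lt_mul_left h2 hν.le))
  rw [hQ] at hcancel
  exact hcancel

end CondC2Aux

namespace CondC2Aux

def Aconst : ℝ := ∫ y : ℝ, Real.exp (-(y ^ 4) / 4)

def cconst (β₁ β₂ : ℝ) : ℝ := |β₁| + 2 * (|β₁| + |β₂|) ^ 2

def Kconst (β₁ β₂ : ℝ) : ℝ := |β₁| + 3 * |β₂| + 1

def Bconst (β₁ β₂ C₄ : ℝ) : ℝ :=
  cconst β₁ β₂ + Real.log (max 1 C₄) + Real.log (max 1 Aconst)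

lemma Kpos (β₁ β₂ : ℝ) : 0 < Kconst β₁ β₂ := by unfold Kconst; positivity

lemma intA : Integrable (fun y : ℝ => Real.exp (-(y ^ 4) / 4)) := by
  have hg : Integrable (fun y : ℝ => Real.exp (1/4) * Real.exp (-(1/4) * y ^ 2)) :=
    (integrable_exp_neg_mul_sq (by norm_num)).const_mul _
  refine hg.mono' ?_ (ae_of_all _ fun y => ?_)
  · exact (Real.continuous_exp.comp (by fun_prop)).aestronglyMeasurable
  · rw [Real.norm_eq_abs, abs_of_pos (Real.exp_pos _), ← Real.exp_add]
    apply Real.exp_le_exp.2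
    nlinarith [sq_nonneg (y ^ 2 - 1), sq_nonneg y]

lemma cont_matOf {n : ℕ} (i j : Fin n) : Continuous fun x : UpIdx n → ℝ => matOf x i j := by
  rcases lt_trichotomy i j with h | h | h
  · simp only [matOf, dif_pos h]; exact continuous_apply _
  · subst h
    simp only [matOf, lt_irrefl, dif_neg, not_false_iff]
    exact continuous_const
  · simp only [matOf, dif_neg (asymm h), dif_pos h]
    exact continuous_apply _

lemma cont_T {n : ℕ} (β₁ β₂ : ℝ) : Continuous fun x : UpIdx n → ℝ => Tmat n β₁ β₂ (matOf x) := by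
  unfold Tmat
  refine Continuous.add ?_ ?_
  · exact continuous_const.mul
      (continuous_finset_sum _ fun i _ => continuous_finset_sum _ fun j _ => cont_matOf i j)
  · exact continuous_const.mul
      (continuous_finset_sum _ fun i _ =>
        (continuous_finset_sum _ fun j _ => cont_matOf i j).pow 2)

lemma cont_T' {n : ℕ} (β₁ β₂ l : ℝ) :
    Continuous fun x : UpIdx n → ℝ => Tmat n β₁ β₂ (truncM l (matOf x)) := by
  have hentry : ∀ i j : Fin n, Continuous fun x : UpIdx n → ℝ => truncM l (matOf x) i j := by
    intro i j
    simp only [truncM, trunc]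
    exact ((cont_matOf i j).max continuous_const).min continuous_const
  unfold Tmat
  refine Continuous.add ?_ ?_
  · exact continuous_const.mul
      (continuous_finset_sum _ fun i _ => continuous_finset_sum _ fun j _ => hentry i j)
  · exact continuous_const.mul
      (continuous_finset_sum _ fun i _ =>
        (continuous_finset_sum _ fun j _ => hentry i j).pow 2)

lemma integralBound (β₁ β₂ C₄ : ℝ) (hC₄pos : 0 < C₄) {ε l : ℝ} (hε : 0 < ε) (hl : 1 ≤ l)
    {n : ℕ} (hn : 1 ≤ n) :
    C₄ ^ (n * (n - 1) / 2) *
      ∫ x in {x : UpIdx n → ℝ |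
          ε < |Tmat n β₁ β₂ (matOf x) - Tmat n β₁ β₂ (truncM l (matOf x))|},
        Real.exp ((n : ℝ) ^ 2 * Tmat n β₁ β₂ (matOf x) - ∑ p : UpIdx n, (x p) ^ 4)
        ∂(Measure.pi fun _ : UpIdx n => (volume : Measure ℝ))
    ≤ Real.exp ((Bconst β₁ β₂ C₄ - ε * l ^ 2 / (4 * Kconst β₁ β₂)) * (n : ℝ) ^ 2) := by
  have hK : 0 < Kconst β₁ β₂ := Kpos β₁ β₂
  have hν : (0:ℝ) < (n:ℝ) := by exact_mod_cast Nat.pos_of_ne_zero (by omega)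
  set S : Set (UpIdx n → ℝ) :=
    {x | ε < |Tmat n β₁ β₂ (matOf x) - Tmat n β₁ β₂ (truncM l (matOf x))|} with hSdef
  set F : (UpIdx n → ℝ) → ℝ :=
    fun x => Real.exp ((n : ℝ) ^ 2 * Tmat n β₁ β₂ (matOf x) - ∑ p : UpIdx n, (x p) ^ 4)
    with hFdef
  set cc : ℝ := (cconst β₁ β₂ - ε * l ^ 2 / (4 * Kconst β₁ β₂)) * (n:ℝ) ^ 2 with hccdef
  set G : (UpIdx n → ℝ) → ℝ :=
    fun x => Real.exp cc * ∏ p : UpIdx n, Real.exp (-((x p) ^ 4) / 4) with hGdef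
  have hμ : (Measure.pi fun _ : UpIdx n => (volume : Measure ℝ))
      = (volume : Measure (UpIdx n → ℝ)) := (volume_pi).symm
  have hGint : Integrable G :=
    (Integrable.fintype_prod (f := fun _ : UpIdx n => fun y : ℝ => Real.exp (-(y ^ 4) / 4))
      (fun _ => intA)).const_mul _
  have hGpos : ∀ x, 0 < G x := fun x => by
    rw [hGdef]
    positivity
  have hS : MeasurableSet S := by
    rw [hSdef]
    exact (isOpen_lt continuous_const ((cont_T β₁ β₂).sub (cont_T' β₁ β₂ l)).abs).measurableSet
  have hFc : Continuous F := by
    rw [hFdef]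
    exact Real.continuous_exp.comp ((continuous_const.mul (cont_T β₁ β₂)).sub
      (continuous_finset_sum _ fun p _ => (continuous_apply p).pow 4))
  have hpt : ∀ x ∈ S, F x ≤ G x := by
    intro x hx
    have hx' : ε < |Tmat n β₁ β₂ (matOf x) - Tmat n β₁ β₂ (truncM l (matOf x))| := hx
    have h1 := TmatBound hn β₁ β₂ x
    have h2 := badBound hn hl x hx'
    have hsum4 : 0 ≤ ∑ p : UpIdx n, (x p) ^ 4 := Finset.sum_nonneg fun p _ => by positivity
    have h3 : ε * l ^ 2 * (n:ℝ) ^ 2 / (4 * Kconst β₁ β₂) ≤ (∑ p : UpIdx n, (x p) ^ 4) / 2 := by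
      rw [div_le_div_iff₀ (by positivity) (by norm_num)]
      unfold Kconst at h2 ⊢
      nlinarith [h2]
    have hexp : (n : ℝ) ^ 2 * Tmat n β₁ β₂ (matOf x) - ∑ p : UpIdx n, (x p) ^ 4
        ≤ cc + (-(∑ p : UpIdx n, (x p) ^ 4) / 4) := by
      rw [hccdef]
      have e : (ε * l ^ 2 / (4 * Kconst β₁ β₂)) * (n:ℝ) ^ 2
          = ε * l ^ 2 * (n:ℝ) ^ 2 / (4 * Kconst β₁ β₂) := by ring
      unfold cconst at h1 ⊢
      nlinarith [h1, h3]
    have hGx : G x = Real.exp (cc + (-(∑ p : UpIdx n, (x p) ^ 4) / 4)) := by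
      rw [hGdef]
      show Real.exp cc * ∏ p : UpIdx n, Real.exp (-(x p ^ 4) / 4) = _
      rw [← Real.exp_sum, ← Real.exp_add]
      congr 1
      rw [← Finset.sum_div, ← Finset.sum_neg_distrib]
    rw [hFdef, hGx]
    exact Real.exp_le_exp.2 hexp
  have hFS : IntegrableOn F S volume := by
    refine Integrable.mono hGint.integrableOn hFc.aestronglyMeasurable.restrict ?_
    rw [ae_restrict_iff' hS]
    refine ae_of_all _ fun x hx => ?_
    rw [Real.norm_eq_abs, Real.norm_eq_abs, abs_of_pos (by rw [hFdef]; exact Real.exp_pos _),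
      abs_of_pos (hGpos x)]
    exact hpt x hx
  have hNle : n * (n - 1) / 2 ≤ n ^ 2 := by
    refine le_trans (Nat.div_le_self _ 2) ?_
    calc n * (n - 1) ≤ n * n := Nat.mul_le_mul_left n (Nat.sub_le n 1)
      _ = n ^ 2 := (sq n).symm
  have hcard : Fintype.card (UpIdx n) ≤ n ^ 2 := by
    refine le_trans (Fintype.card_subtype_le _) ?_
    rw [Fintype.card_prod, Fintype.card_fin]
    exact le_of_eq (sq n).symm
  have hA0 : 0 ≤ Aconst := integral_nonneg fun y => (Real.exp_pos _).le
  have hM1 : (0:ℝ) < max 1 C₄ := lt_of_lt_of_le one_pos (le_max_left _ _)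
  have hM2 : (0:ℝ) < max 1 Aconst := lt_of_lt_of_le one_pos (le_max_left _ _)
  rw [hμ]
  calc C₄ ^ (n * (n - 1) / 2) * ∫ x in S, F x
      ≤ C₄ ^ (n * (n - 1) / 2) * ∫ x in S, G x := by
        refine mul_le_mul_of_nonneg_left ?_ (pow_nonneg hC₄pos.le _)
        exact setIntegral_mono_on hFS hGint.integrableOn hS hpt
    _ ≤ C₄ ^ (n * (n - 1) / 2) * ∫ x, G x :=
        mul_le_mul_of_nonneg_left
          (setIntegral_le_integral hGint (ae_of_all _ fun x => (hGpos x).le))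
          (pow_nonneg hC₄pos.le _)
    _ = C₄ ^ (n * (n - 1) / 2) * (Real.exp cc * Aconst ^ Fintype.card (UpIdx n)) := by
        rw [hGdef]
        rw [MeasureTheory.integral_const_mul]
        rw [volume_pi, MeasureTheory.integral_fintype_prod_eq_pow
          (fun y : ℝ => Real.exp (-(y ^ 4) / 4))]
        rfl
    _ ≤ (max 1 C₄) ^ (n ^ 2) * (Real.exp cc * (max 1 Aconst) ^ (n ^ 2)) := by
        have hC1 : C₄ ^ (n * (n - 1) / 2) ≤ (max 1 C₄) ^ (n ^ 2) :=
          le_trans (pow_le_pow_left₀ hC₄pos.le (le_max_right 1 C₄) _)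
            (pow_le_pow_right₀ (le_max_left 1 C₄) hNle)
        have hA1 : Aconst ^ Fintype.card (UpIdx n) ≤ (max 1 Aconst) ^ (n ^ 2) :=
          le_trans (pow_le_pow_left₀ hA0 (le_max_right 1 Aconst) _)
            (pow_le_pow_right₀ (le_max_left 1 Aconst) hcard)
        exact mul_le_mul hC1 (mul_le_mul_of_nonneg_left hA1 (Real.exp_pos _).le)
          (by positivity) (by positivity)
    _ = Real.exp ((Bconst β₁ β₂ C₄ - ε * l ^ 2 / (4 * Kconst β₁ β₂)) * (n : ℝ) ^ 2) := by
        rw [← Real.exp_log hM1, ← Real.exp_log hM2, ← Real.exp_nat_mul, ← Real.exp_nat_mul,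
          ← Real.exp_add, ← Real.exp_add]
        congr 1
        rw [hccdef]
        unfold Bconst
        push_cast
        ring

lemma elog_le_of_le_exp {r b : ℝ} (h : r ≤ Real.exp b) : elog r ≤ (b : EReal) := by
  unfold elog
  split_ifs with h0
  · exact bot_le
  · have hr : 0 < r := not_le.1 h0
    have := Real.log_le_log hr h
    rw [Real.log_exp] at this
    exact_mod_cast this

lemma ereal_scale {c b r : ℝ} (hc : 0 < c) {x : EReal} (hx : x ≤ (b : EReal))
    (hcb : c * b ≤ r) : (c : EReal) * x ≤ (r : EReal) := by
  induction x using EReal.rec with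
  | bot =>
    rw [EReal.coe_mul_bot_of_pos hc]
    exact bot_le
  | coe y =>
    have hy : y ≤ b := by exact_mod_cast hx
    rw [← EReal.coe_mul]
    exact_mod_cast le_trans (mul_le_mul_of_nonneg_left hy hc.le) hcb
  | top =>
    exact absurd hx (by simp)

end CondC2Aux

open CondC2Aux

/-- **Theorem (condition (C2)' for the `e^{−x⁴}` edge–two-star model).**
With base measure of density `C₄ e^{−x⁴}`, for every `ε > 0`,
`limsup_{l→∞} limsup_{n→∞} (1/n²) ln (C₄^{n(n−1)/2}
∫_{|T(x)−T(x^l)|>ε} exp(n²T(x) − Σ_{i<j} x_{ij}⁴) dx) = −∞`. -/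
theorem quartic_two_star_condC2'
    (β₁ β₂ : ℝ) (C₄ : ℝ) (hC₄pos : 0 < C₄)
    (hC₄ : C₄ * (∫ x : ℝ, Real.exp (-x ^ 4)) = 1) :
    ∀ ε : ℝ, 0 < ε →
      Filter.limsup (fun l : ℝ =>
        Filter.limsup (fun n : ℕ =>
          (((1 / (n : ℝ) ^ 2 : ℝ)) : EReal) *
            elog (C₄ ^ (n * (n - 1) / 2) *
              ∫ x in {x : UpIdx n → ℝ |
                  ε < |Tmat n β₁ β₂ (matOf x) - Tmat n β₁ β₂ (truncM l (matOf x))|},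
                Real.exp ((n : ℝ) ^ 2 * Tmat n β₁ β₂ (matOf x) - ∑ p : UpIdx n, (x p) ^ 4)
                ∂(Measure.pi fun _ : UpIdx n => (volume : Measure ℝ)))) atTop) atTop
        = (⊥ : EReal) := by
  intro ε hε
  have hK : 0 < Kconst β₁ β₂ := Kpos β₁ β₂
  set K := Kconst β₁ β₂ with hKdef
  set B := Bconst β₁ β₂ C₄ with hBdef
  have key : ∀ l : ℝ, 1 ≤ l →
      Filter.limsup (fun n : ℕ =>
          (((1 / (n : ℝ) ^ 2 : ℝ)) : EReal) *
            elog (C₄ ^ (n * (n - 1) / 2) *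
              ∫ x in {x : UpIdx n → ℝ |
                  ε < |Tmat n β₁ β₂ (matOf x) - Tmat n β₁ β₂ (truncM l (matOf x))|},
                Real.exp ((n : ℝ) ^ 2 * Tmat n β₁ β₂ (matOf x) - ∑ p : UpIdx n, (x p) ^ 4)
                ∂(Measure.pi fun _ : UpIdx n => (volume : Measure ℝ)))) atTop
        ≤ ((B - ε * l ^ 2 / (4 * K) : ℝ) : EReal) := by
    intro l hl
    refine Filter.limsup_le_of_le (by isBoundedDefault) ?_
    filter_upwards [eventually_ge_atTop 1] with n hn
    have hν : (0:ℝ) < (n:ℝ) := by exact_mod_cast Nat.pos_of_ne_zero (by omega)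
    have hb := integralBound β₁ β₂ C₄ hC₄pos hε hl hn
    have he := elog_le_of_le_exp hb
    refine ereal_scale (by positivity) he ?_
    rw [hBdef, hKdef]
    field_simp
    exact le_rfl
  rw [EReal.eq_bot_iff_forall_lt]
  intro M
  have hlt : ((M - 1 : ℝ) : EReal) < ((M : ℝ) : EReal) := by
    exact_mod_cast sub_one_lt M
  refine lt_of_le_of_lt ?_ hlt
  refine Filter.limsup_le_of_le (by isBoundedDefault) ?_
  filter_upwards [eventually_ge_atTop (max 1 (4 * K * (B - (M - 1)) / ε + 1))] with l hlL
  have hl1 : 1 ≤ l := le_trans (le_max_left _ _) hlL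
  have hl2 : 4 * K * (B - (M - 1)) / ε + 1 ≤ l := le_trans (le_max_right _ _) hlL
  refine (key l hl1).trans ?_
  have hgoal : B - ε * l ^ 2 / (4 * K) ≤ M - 1 := by
    have e1 : ε * (4 * K * (B - (M - 1)) / ε + 1) = 4 * K * (B - (M - 1)) + ε := by
      field_simp
    have e2 : 4 * K * (B - (M - 1)) + ε ≤ ε * l := by
      rw [← e1]
      exact mul_le_mul_of_nonneg_left hl2 hε.le
    have e3 : ε * l ≤ ε * l ^ 2 := by
      have hll : l ≤ l ^ 2 := by nlinarith [hl1]
      exact mul_le_mul_of_nonneg_left hll hε.le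
    have e4 : B - (M - 1) ≤ ε * l ^ 2 / (4 * K) := by
      rw [le_div_iff₀ (by positivity)]
      nlinarith [e2, e3, hε]
    linarith
  exact_mod_cast hgoal

end
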